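/- For every propagator p over Val' and every view φ, the derived propagator φ̂(p) = φ⁻ ∘ p ∘ φ is a propagator over Val: it maps domains to domains, it is contracting (for all domains d, φ̂(p)(d) ⊆ d pointwise), and it is monotone (d' ⊆ d implies φ̂(p)(d') ⊆ φ̂(p)(d) pointwise). -/

import Mathlib

namespace Stmt1

variable {Var Val Val' : Type*}

/-- The assignment set of a domain. -/
def asn (d : Var → Set Val) : Set (Var → Val) := {a | ∀ x, a x ∈ d x}

/-- A view applied to a domain (pointwise image). -/
def img (φ : Var → Val → Val') (d : Var → Set Val) : Var → Set Val' := fun x => φ x '' d x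

/-- The inverse of a view applied to a domain (pointwise preimage). -/
def pre (φ : Var → Val → Val') (d : Var → Set Val') : Var → Set Val := fun x => φ x ⁻¹' d x

/-- The derived propagator `φ̂(p) = φ⁻ ∘ p ∘ φ`. -/
def derived (φ : Var → Val → Val') (p : (Var → Set Val') → Var → Set Val')
    (d : Var → Set Val) : Var → Set Val := pre φ (p (img φ d))

/-- For every propagator `p` over `Val'` and every view `φ`, the derived propagator
`φ̂(p) = φ⁻ ∘ p ∘ φ` is a propagator over `Val`: it maps domains to domains, it is contracting,
and it is monotone. -/
theorem derived_is_propagator (φ : Var → Val → Val')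
    (hφ : ∀ x, Function.Injective (φ x))
    (p : (Var → Set Val') → Var → Set Val')
    (hcontr : ∀ d x, p d x ⊆ d x)
    (hmono : ∀ d' d : Var → Set Val', (∀ x, d' x ⊆ d x) → ∀ x, p d' x ⊆ p d x) :
    (∀ d : Var → Set Val, ∀ x, derived φ p d x ⊆ d x) ∧
    (∀ d' d : Var → Set Val, (∀ x, d' x ⊆ d x) →
      ∀ x, derived φ p d' x ⊆ derived φ p d x) := by
  constructor
  · intro d x v hv
    have h : φ x v ∈ img φ d x := hcontr (img φ d) x hv
    obtain ⟨w, hw, he⟩ := h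
    exact (hφ x he) ▸ hw
  · intro d' d h x
    exact fun v hv => hmono (img φ d') (img φ d)
      (fun y => Set.image_mono (h y)) x hv

end Stmt1
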